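/- arXiv:math/0611448 — 2 statements merged into one kernel-verified Lean document; each statement's English description precedes it below -/
import Mathlib

section
/- Let k ≥ 2 and ℓ ≥ 2 be integers. Let T₁ : V^5 → ℝ and T_ℓ : V^{4+ℓ} → ℝ be multilinear maps with the following vanishing property: T₁ (respectively T_ℓ) vanishes on every tuple of distinguished basis vectors except possibly on tuples that are obtained, by permuting the first four entries only, from a tuple of the form (U_0, U_j, U_j, S_j; U_j) or (U_0, U_j, U_j, U_0; U_j) (respectively (U_0, U_j, U_j, S_j; U_j,…,U_j) or (U_0, U_j, U_j, U_0; U_j,…,U_j), with U_j in all of the last ℓ slots) for some 1 ≤ j ≤ k. Assume moreover T₁(U_0,U_j,U_j,S_j;U_j) ≠ 0 for every j. Then for every isomorphism A of the 0-model 𝒱 one has T₁(AU_0,AU_j,AU_j,AS_j;AU_j) ≠ 0 for every j, and Σ_{j=1}^k T_ℓ(AU_0,AU_j,AU_j,AS_j;AU_j,…,AU_j) / (T₁(AU_0,AU_j,AU_j,AS_j;AU_j))^ℓ = Σ_{j=1}^k T_ℓ(U_0,U_j,U_j,S_j;U_j,…,U_j) / (T₁(U_0,U_j,U_j,S_j;U_j))^ℓ.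 (This is the algebraic content of the assertion that β_ℓ is an ℓ-model invariant, i.e., independent of the normalized basis chosen.) -/
open Finset

/-- Index type for the distinguished basis of `V = ℝ^{3k+2}`:
`Sum.inl i ↔ U_i` (0 ≤ i ≤ k), `Sum.inr (Sum.inl i) ↔ V_i` (0 ≤ i ≤ k),
`Sum.inr (Sum.inr i) ↔ S_{i+1}` (1 ≤ i+1 ≤ k). -/
abbrev Idx (k : ℕ) := Fin (k+1) ⊕ (Fin (k+1) ⊕ Fin k)

abbrev Model (k : ℕ) := Idx k → ℝ

/-- The distinguished basis vector `U_i`. -/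
def U (k : ℕ) (i : Fin (k+1)) : Model k := Pi.single (Sum.inl i) 1

/-- The distinguished basis vector `V_i`. -/
def Vb (k : ℕ) (i : Fin (k+1)) : Model k := Pi.single (Sum.inr (Sum.inl i)) 1

/-- The distinguished basis vector `S_{i+1}`. -/
def S (k : ℕ) (i : Fin k) : Model k := Pi.single (Sum.inr (Sum.inr i)) 1

/-- The inner product `(·,·)` with `(U_0,V_0) = (U_i,V_i) = 1`, `(S_i,S_i) = ε_i`. -/
def ip (k : ℕ) (ε : Fin k → ℝ) (x y : Model k) : ℝ :=
  (∑ i : Fin (k+1),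
    (x (Sum.inl i) * y (Sum.inr (Sum.inl i)) + x (Sum.inr (Sum.inl i)) * y (Sum.inl i)))
  + ∑ i : Fin k, ε i * x (Sum.inr (Sum.inr i)) * y (Sum.inr (Sum.inr i))

/-- `A_i(x,y) = x_{U_0} y_{U_i} - x_{U_i} y_{U_0}`. -/
def Af (k : ℕ) (i : Fin k) (x y : Model k) : ℝ :=
  x (Sum.inl 0) * y (Sum.inl i.succ) - x (Sum.inl i.succ) * y (Sum.inl 0)

/-- `B_i(x,y) = x_{U_i} y_{S_i} - x_{S_i} y_{U_i}`. -/
def Bf (k : ℕ) (i : Fin k) (x y : Model k) : ℝ :=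
  x (Sum.inl i.succ) * y (Sum.inr (Sum.inr i)) - x (Sum.inr (Sum.inr i)) * y (Sum.inl i.succ)

/-- The algebraic curvature tensor `R` of the 0-model. -/
def Rt (k : ℕ) (x y z w : Model k) : ℝ :=
  ∑ i : Fin k, (Af k i x y * Bf k i z w + Bf k i x y * Af k i z w)

/-- `A_V = ker R`. -/
def AV (k : ℕ) : Set (Model k) := {ξ | ∀ x y z, Rt k ξ x y z = 0}

/-- `A_{S,V} = A_V^⊥`. -/
def ASV (k : ℕ) (ε : Fin k → ℝ) : Set (Model k) := {η | ∀ ξ ∈ AV k, ip k ε η ξ = 0}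

/-- The distinguished basis vector of `V` with index `idx`. -/
def e (k : ℕ) (idx : Idx k) : Model k := Pi.single idx 1

/-- The index tuple `(U_0, U_j, U_j, S_j)`. -/
def tS (k : ℕ) (j : Fin k) : Fin 4 → Idx k :=
  ![Sum.inl 0, Sum.inl j.succ, Sum.inl j.succ, Sum.inr (Sum.inr j)]

/-- The index tuple `(U_0, U_j, U_j, U_0)`. -/
def tU (k : ℕ) (j : Fin k) : Fin 4 → Idx k :=
  ![Sum.inl 0, Sum.inl j.succ, Sum.inl j.succ, Sum.inl 0]

/-- A tuple of basis indices (4 "curvature" slots plus `ℓ` "covariant derivative" slots)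
is *good* if it is obtained, by permuting the first four entries only, from a tuple of the
form `(U_0, U_j, U_j, S_j; U_j, …, U_j)` or `(U_0, U_j, U_j, U_0; U_j, …, U_j)`
for some `1 ≤ j ≤ k`. -/
def goodTuple (k ℓ : ℕ) (v : Fin 4 ⊕ Fin ℓ → Idx k) : Prop :=
  ∃ (j : Fin k) (π : Equiv.Perm (Fin 4)),
    ((∀ m : Fin 4, v (Sum.inl m) = tS k j (π m)) ∨
     (∀ m : Fin 4, v (Sum.inl m) = tU k j (π m))) ∧
    (∀ m : Fin ℓ, v (Sum.inr m) = Sum.inl j.succ)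

/-- The tuple of vectors `(x₀, x₁, x₂, x₃; y, …, y)`. -/
def tup (k ℓ : ℕ) (x₀ x₁ x₂ x₃ y : Model k) : Fin 4 ⊕ Fin ℓ → Model k :=
  Sum.elim ![x₀, x₁, x₂, x₃] (fun _ => y)


-- basic coordinate lemmas
lemma U_apply (k : ℕ) (i : Fin (k+1)) (idx : Idx k) :
    U k i idx = if idx = Sum.inl i then 1 else 0 := by
  simp [U, Pi.single_apply]

lemma S_apply (k : ℕ) (i : Fin k) (idx : Idx k) :
    S k i idx = if idx = Sum.inr (Sum.inr i) then 1 else 0 := by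
  simp [S, Pi.single_apply]

lemma Vb_apply (k : ℕ) (i : Fin (k+1)) (idx : Idx k) :
    Vb k i idx = if idx = Sum.inr (Sum.inl i) then 1 else 0 := by
  simp [Vb, Pi.single_apply]

-- extraction lemmas
lemma Rt_extract_Bf (k : ℕ) (x y : Model k) (i : Fin k) :
    Rt k x y (U k 0) (U k i.succ) = Bf k i x y := by
  unfold Rt
  rw [Finset.sum_eq_single i]
  · simp [Af, Bf, U_apply, Fin.succ_ne_zero, (Fin.succ_ne_zero i).symm]
  · intro m _ hm
    simp [Af, Bf, U_apply, (Fin.succ_injective k).ne_iff, hm, hm.symm,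
      Fin.succ_ne_zero, (Fin.succ_ne_zero m).symm]
  · simp

lemma Rt_extract_Af (k : ℕ) (x y : Model k) (i : Fin k) :
    Rt k x y (U k i.succ) (S k i) = Af k i x y := by
  unfold Rt
  rw [Finset.sum_eq_single i]
  · simp [Af, Bf, U_apply, S_apply, Fin.succ_ne_zero, (Fin.succ_ne_zero i).symm]
  · intro m _ hm
    simp [Af, Bf, U_apply, S_apply, (Fin.succ_injective k).ne_iff, hm, hm.symm,
      Fin.succ_ne_zero, (Fin.succ_ne_zero m).symm]
  · simp

lemma Rt_zero_of_pair (k : ℕ) {x y : Model k}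
    (h : ∀ i : Fin k, Af k i x y = 0 ∧ Bf k i x y = 0) (z w : Model k) :
    Rt k x y z w = 0 := by
  unfold Rt
  refine Finset.sum_eq_zero fun i _ => ?_
  rw [(h i).1, (h i).2]; ring

lemma mem_AV_of_coords (k : ℕ) {x : Model k}
    (h1 : ∀ i : Fin (k+1), x (Sum.inl i) = 0)
    (h2 : ∀ i : Fin k, x (Sum.inr (Sum.inr i)) = 0) : x ∈ AV k := by
  intro y z w
  refine Rt_zero_of_pair k (fun i => ⟨?_, ?_⟩) z w <;> simp [Af, Bf, h1, h2]

lemma coords_of_mem_AV (k : ℕ) (hk : 0 < k) {x : Model k} (hx : x ∈ AV k) :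
    (∀ i : Fin (k+1), x (Sum.inl i) = 0) ∧ ∀ i : Fin k, x (Sum.inr (Sum.inr i)) = 0 := by
  constructor
  · intro i
    rcases Fin.eq_zero_or_eq_succ i with rfl | ⟨j, rfl⟩
    · have h := hx (U k (⟨0, hk⟩ : Fin k).succ) (U k (⟨0, hk⟩ : Fin k).succ) (S k ⟨0, hk⟩)
      rw [Rt_extract_Af] at h
      simpa [Af, U_apply, Fin.succ_ne_zero, Fin.ext_iff] using h
    · have h := hx (S k j) (U k 0) (U k j.succ)
      rw [Rt_extract_Bf] at h
      simpa [Bf, S_apply, Fin.succ_ne_zero] using h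
  · intro i
    have h := hx (U k i.succ) (U k 0) (U k i.succ)
    rw [Rt_extract_Bf] at h
    simpa [Bf, U_apply] using h

lemma Vb_mem_AV (k : ℕ) (i : Fin (k+1)) : Vb k i ∈ AV k := by
  refine mem_AV_of_coords k (fun m => ?_) (fun m => ?_) <;> simp [Vb_apply]

lemma ip_with_AV (k : ℕ) (ε : Fin k → ℝ) (x : Model k) {ξ : Model k} (hξ : ξ ∈ AV k)
    (hk : 0 < k) :
    ip k ε x ξ = ∑ i : Fin (k+1), x (Sum.inl i) * ξ (Sum.inr (Sum.inl i)) := by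
  obtain ⟨h1, h2⟩ := coords_of_mem_AV k hk hξ
  simp [ip, h1, h2]

lemma ip_Vb (k : ℕ) (ε : Fin k → ℝ) (x : Model k) (i : Fin (k+1)) :
    ip k ε x (Vb k i) = x (Sum.inl i) := by
  simp [ip, Vb_apply, Finset.sum_ite_eq, Finset.sum_ite_eq']

lemma model_repr (k : ℕ) (x : Model k) : x = ∑ idx : Idx k, x idx • e k idx := by
  have : ∀ idx : Idx k, x idx • e k idx = Pi.single idx (x idx) := by
    intro idx
    rw [e, ← Pi.single_smul, smul_eq_mul, mul_one]
  rw [Finset.sum_congr rfl (fun idx _ => this idx), Finset.univ_sum_single]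

lemma apply_map_coord (k : ℕ) (A : Model k ≃ₗ[ℝ] Model k) (x : Model k) (idx' : Idx k) :
    (A x) idx' = ∑ idx : Idx k, x idx * (A (e k idx)) idx' := by
  conv_lhs => rw [model_repr k x]
  rw [map_sum]
  simp [Finset.sum_apply]

section withA
variable {k : ℕ} (A : Model k ≃ₗ[ℝ] Model k)

lemma symm_R (hAR : ∀ x y z w, Rt k (A x) (A y) (A z) (A w) = Rt k x y z w) :
    ∀ x y z w, Rt k (A.symm x) (A.symm y) (A.symm z) (A.symm w) = Rt k x y z w := by
  intro x y z w
  have h := hAR (A.symm x) (A.symm y) (A.symm z) (A.symm w)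
  simpa [A.apply_symm_apply] using h.symm

lemma AV_pres (hAR : ∀ x y z w, Rt k (A x) (A y) (A z) (A w) = Rt k x y z w)
    {x : Model k} (hx : x ∈ AV k) : A x ∈ AV k := by
  intro y z w
  have h : Rt k (A x) y z w
      = Rt k (A x) (A (A.symm y)) (A (A.symm z)) (A (A.symm w)) := by
    simp [A.apply_symm_apply]
  rw [h, hAR]
  exact hx _ _ _

lemma symm_ip (ε : Fin k → ℝ) (hAip : ∀ x y, ip k ε (A x) (A y) = ip k ε x y) :
    ∀ x y, ip k ε (A.symm x) (A.symm y) = ip k ε x y := by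
  intro x y
  have h := hAip (A.symm x) (A.symm y)
  simpa [A.apply_symm_apply] using h.symm

lemma map_ASV_coords (hk0 : 0 < k) (ε : Fin k → ℝ)
    (hAip : ∀ x y, ip k ε (A x) (A y) = ip k ε x y)
    (hAVsymm : ∀ ξ ∈ AV k, A.symm ξ ∈ AV k)
    {z : Model k} (hz : ∀ m : Fin (k+1), z (Sum.inl m) = 0) :
    ∀ m : Fin (k+1), (A z) (Sum.inl m) = 0 := by
  intro m
  rw [← ip_Vb k ε (A z) m, ← A.apply_symm_apply (Vb k m), hAip,
      ip_with_AV k ε z (hAVsymm _ (Vb_mem_AV k m)) hk0]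
  simp [hz]

end withA

section withA2
variable {k : ℕ} (A : Model k ≃ₗ[ℝ] Model k) (ε : Fin k → ℝ)
  (hAip : ∀ x y, ip k ε (A x) (A y) = ip k ε x y)
  (hAR : ∀ x y z w, Rt k (A x) (A y) (A z) (A w) = Rt k x y z w)
  (hk0 : 0 < k)

include hAip hAR hk0

-- (F2)  A S_j has no U-components
lemma F2 : ∀ (j : Fin k) (i : Fin (k+1)), (A (S k j)) (Sum.inl i) = 0 := by
  intro j
  refine map_ASV_coords A hk0 ε hAip (fun ξ hξ => AV_pres A.symm (symm_R A hAR) hξ) ?_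
  intro m; simp [S_apply]

-- column nonvanishing of q
lemma hq_col : ∀ i : Fin k, ∃ m : Fin k, (A (S k m)) (Sum.inr (Sum.inr i)) ≠ 0 := by
  intro i
  by_contra hq
  push_neg at hq
  set x := A.symm (S k i) with hxdef
  have hx_inl : ∀ m : Fin (k+1), x (Sum.inl m) = 0 := by
    refine map_ASV_coords A.symm hk0 ε (symm_ip A ε hAip)
      (fun ξ hξ => by simpa using AV_pres A hAR hξ) ?_
    intro m; simp [S_apply]
  have h1 : (A x) (Sum.inr (Sum.inr i)) = 1 := by
    rw [hxdef, A.apply_symm_apply]; simp [S_apply]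
  rw [apply_map_coord, Fintype.sum_sum_type] at h1
  have hz1 : ∀ m : Fin (k+1), x (Sum.inl m) * (A (e k (Sum.inl m))) (Sum.inr (Sum.inr i)) = 0 := by
    intro m; rw [hx_inl m]; ring
  have hz2 : ∀ m : Fin (k+1) ⊕ Fin k,
      x (Sum.inr m) * (A (e k (Sum.inr m))) (Sum.inr (Sum.inr i)) = 0 := by
    rintro (m | m)
    · have : A (e k (Sum.inr (Sum.inl m))) ∈ AV k := AV_pres A hAR (Vb_mem_AV k m)
      rw [(coords_of_mem_AV k hk0 this).2 i]; ring
    · rw [show e k (Sum.inr (Sum.inr m)) = S k m from rfl, hq m]; ring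
  rw [Finset.sum_congr rfl (fun m _ => hz1 m), Finset.sum_congr rfl (fun m _ => hz2 m)] at h1
  simp at h1

lemma Rt_pair_transfer {x y : Model k} (h : ∀ z w, Rt k x y z w = 0) :
    ∀ z w, Rt k (A x) (A y) z w = 0 := by
  intro z w
  have h2 := hAR x y (A.symm z) (A.symm w)
  rw [A.apply_symm_apply, A.apply_symm_apply] at h2
  rw [h2]; exact h _ _

-- (F3)  c^j_i q^m_i = 0 for j ≠ m
lemma F3 : ∀ j m : Fin k, j ≠ m → ∀ i : Fin k,
    (A (U k j.succ)) (Sum.inl i.succ) * (A (S k m)) (Sum.inr (Sum.inr i)) = 0 := by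
  intro j m hjm i
  have hzero : ∀ z w, Rt k (U k j.succ) (S k m) z w = 0 := by
    refine Rt_zero_of_pair k (fun i' => ⟨?_, ?_⟩)
    · simp [Af, U_apply, S_apply, Fin.succ_ne_zero]
    · simp only [Bf, U_apply, S_apply]
      split_ifs <;> simp_all [Fin.succ_inj]
  have hB : Bf k i (A (U k j.succ)) (A (S k m)) = 0 := by
    rw [← Rt_extract_Bf]
    exact Rt_pair_transfer A ε hAip hAR hk0 hzero _ _
  rw [Bf, F2 A ε hAip hAR hk0 m i.succ] at hB
  linarith [hB]

-- (F1)  A U_0 has no U_i components, i ≥ 1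
lemma F1 : ∀ i : Fin k, (A (U k 0)) (Sum.inl i.succ) = 0 := by
  intro i
  have hzero : ∀ (m : Fin k) z w, Rt k (U k 0) (S k m) z w = 0 := by
    intro m
    refine Rt_zero_of_pair k (fun i' => ⟨?_, ?_⟩)
    · simp [Af, U_apply, S_apply, Fin.succ_ne_zero]
    · simp [Bf, U_apply, S_apply, Fin.succ_ne_zero, (Fin.succ_ne_zero i').symm]
  obtain ⟨m, hm⟩ := hq_col A ε hAip hAR hk0 i
  have hB : Bf k i (A (U k 0)) (A (S k m)) = 0 := by
    rw [← Rt_extract_Bf]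
    exact Rt_pair_transfer A ε hAip hAR hk0 (hzero m) _ _
  rw [Bf, F2 A ε hAip hAR hk0 m i.succ] at hB
  have : (A (U k 0)) (Sum.inl i.succ) * (A (S k m)) (Sum.inr (Sum.inr i)) = 0 := by
    linarith [hB]
  exact (mul_eq_zero.mp this).resolve_right hm

-- (F5)  rows of c span
lemma F5 : ∀ i : Fin k, ∃ d : Fin k → ℝ, ∀ i' : Fin k,
    (∑ j : Fin k, d j * (A (U k j.succ)) (Sum.inl i'.succ)) = if i = i' then 1 else 0 := by
  intro i
  set x := A.symm (U k i.succ) with hxdef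
  refine ⟨fun j => x (Sum.inl j.succ), fun i' => ?_⟩
  have h1 : (A x) (Sum.inl i'.succ) = if i = i' then 1 else 0 := by
    rw [hxdef, A.apply_symm_apply]
    simp [U_apply, Fin.succ_inj, eq_comm]
  rw [apply_map_coord, Fintype.sum_sum_type, Fin.sum_univ_succ] at h1
  rw [show e k (Sum.inl (0 : Fin (k+1))) = U k 0 from rfl, F1 A ε hAip hAR hk0 i'] at h1
  have hz2 : ∀ m : Fin (k+1) ⊕ Fin k,
      x (Sum.inr m) * (A (e k (Sum.inr m))) (Sum.inl i'.succ) = 0 := by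
    rintro (m | m)
    · have : A (e k (Sum.inr (Sum.inl m))) ∈ AV k := AV_pres A hAR (Vb_mem_AV k m)
      rw [(coords_of_mem_AV k hk0 this).1 i'.succ]; ring
    · rw [show e k (Sum.inr (Sum.inr m)) = S k m from rfl,
        F2 A ε hAip hAR hk0 m i'.succ]; ring
  rw [Finset.sum_congr rfl (fun m _ => hz2 m)] at h1
  simpa [show ∀ i0 : Fin (k+1), e k (Sum.inl i0) = U k i0 from fun _ => rfl] using h1

-- (F4)
lemma F4 : ∀ j : Fin k,
    (∑ i : Fin k, (A (U k 0)) (Sum.inl 0) * (A (U k j.succ)) (Sum.inl i.succ)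
      * (A (U k j.succ)) (Sum.inl i.succ) * (A (S k j)) (Sum.inr (Sum.inr i))) = 1 := by
  intro j
  have h := hAR (U k 0) (U k j.succ) (U k j.succ) (S k j)
  have hrhs : Rt k (U k 0) (U k j.succ) (U k j.succ) (S k j) = 1 := by
    unfold Rt
    rw [Finset.sum_eq_single j]
    · simp [Af, Bf, U_apply, S_apply, Fin.succ_ne_zero, (Fin.succ_ne_zero j).symm]
    · intro m _ hm
      simp [Af, Bf, U_apply, S_apply, Fin.succ_ne_zero, (Fin.succ_ne_zero m).symm,
        (Fin.succ_injective k).ne_iff, hm, hm.symm]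
    · simp
  rw [hrhs] at h
  rw [← h]
  unfold Rt
  refine Finset.sum_congr rfl fun i _ => ?_
  rw [Af, Bf, Af, Bf, F1 A ε hAip hAR hk0 i, F2 A ε hAip hAR hk0 j i.succ,
    F2 A ε hAip hAR hk0 j 0]
  ring

lemma sigma_exists : ∀ j : Fin k, ∃! i : Fin k,
    (A (U k j.succ)) (Sum.inl i.succ) ≠ 0 ∧ (A (S k j)) (Sum.inr (Sum.inr i)) ≠ 0 := by
  intro j
  have h4 := F4 A ε hAip hAR hk0 j
  have hex : ∃ i : Fin k,
      (A (U k j.succ)) (Sum.inl i.succ) ≠ 0 ∧ (A (S k j)) (Sum.inr (Sum.inr i)) ≠ 0 := by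
    by_contra hno
    push_neg at hno
    rw [Finset.sum_eq_zero] at h4
    · exact one_ne_zero h4.symm
    · intro i _
      by_cases hc : (A (U k j.succ)) (Sum.inl i.succ) = 0
      · rw [hc]; ring
      · rw [hno i hc]; ring
  obtain ⟨i, hi⟩ := hex
  refine ⟨i, hi, fun i' hi' => ?_⟩
  by_contra hne
  obtain ⟨d, hd⟩ := F5 A ε hAip hAR hk0 i'
  have hcol : ∀ m : Fin k, m ≠ j → ∀ ii : Fin k,
      (A (S k j)) (Sum.inr (Sum.inr ii)) ≠ 0 → (A (U k m.succ)) (Sum.inl ii.succ) = 0 := by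
    intro m hm ii hq
    have := F3 A ε hAip hAR hk0 m j hm ii
    exact (mul_eq_zero.mp this).resolve_right hq
  have h1 : d j * (A (U k j.succ)) (Sum.inl i'.succ) = 1 := by
    have := hd i'
    rw [if_pos rfl] at this
    rw [← this]
    rw [Finset.sum_eq_single j]
    · intro m _ hm
      rw [hcol m hm i' hi'.2]; ring
    · simp
  have h2 : d j * (A (U k j.succ)) (Sum.inl i.succ) = 0 := by
    have := hd i
    rw [if_neg hne] at this
    rw [← this]
    rw [Finset.sum_eq_single j]
    · intro m _ hm
      rw [hcol m hm i hi.2]; ring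
    · simp
  rcases mul_eq_zero.mp h2 with h | h
  · rw [h, zero_mul] at h1; exact zero_ne_one h1
  · exact hi.1 h

end withA2

lemma tup_inl (k ℓ' : ℕ) (x₀ x₁ x₂ x₃ y : Model k) :
    tup k ℓ' x₀ x₁ x₂ x₃ y (Sum.inl 0) = x₀ ∧ tup k ℓ' x₀ x₁ x₂ x₃ y (Sum.inl 1) = x₁ ∧
    tup k ℓ' x₀ x₁ x₂ x₃ y (Sum.inl 2) = x₂ ∧ tup k ℓ' x₀ x₁ x₂ x₃ y (Sum.inl 3) = x₃ :=
  ⟨rfl, rfl, rfl, rfl⟩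

lemma expand_T (k ℓ' : ℕ) (hℓ' : 0 < ℓ')
    (T : MultilinearMap ℝ (fun _ : Fin 4 ⊕ Fin ℓ' => Model k) ℝ)
    (hT : ∀ v : Fin 4 ⊕ Fin ℓ' → Idx k, ¬ goodTuple k ℓ' v → T (fun m => e k (v m)) = 0)
    (x₀ x₃ y : Model k) (σj : Fin k)
    (h1 : ∀ i : Fin k, x₀ (Sum.inl i.succ) = 0)
    (h2 : ∀ i : Fin (k+1), x₃ (Sum.inl i) = 0)
    (h3 : ∀ i : Fin k, i ≠ σj → y (Sum.inl i.succ) = 0 ∨ x₃ (Sum.inr (Sum.inr i)) = 0) :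
    T (tup k ℓ' x₀ y y x₃ y)
      = x₀ (Sum.inl 0) * (y (Sum.inl σj.succ))^(2+ℓ') * x₃ (Sum.inr (Sum.inr σj))
        * T (tup k ℓ' (U k 0) (U k σj.succ) (U k σj.succ) (S k σj) (U k σj.succ)) := by
  classical
  set F := tup k ℓ' x₀ y y x₃ y with hFdef
  have hF0 : F (Sum.inl 0) = x₀ := rfl
  have hF1 : F (Sum.inl 1) = y := rfl
  have hF2 : F (Sum.inl 2) = y := rfl
  have hF3 : F (Sum.inl 3) = x₃ := rfl
  have hFr : ∀ m : Fin ℓ', F (Sum.inr m) = y := fun _ => rfl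
  set r₀ : Fin 4 ⊕ Fin ℓ' → Idx k :=
    Sum.elim ![Sum.inl 0, Sum.inl σj.succ, Sum.inl σj.succ, Sum.inr (Sum.inr σj)]
      (fun _ => Sum.inl σj.succ) with hr₀def
  have step1 : T F = ∑ r : (Fin 4 ⊕ Fin ℓ') → Idx k,
      (∏ m, F m (r m)) * T (fun m => e k (r m)) := by
    have hrep : T F = T (fun m => ∑ idx : Idx k, F m idx • e k idx) := by
      exact congrArg T (funext fun m => model_repr k (F m))
    rw [hrep, MultilinearMap.map_sum]
    refine Finset.sum_congr rfl fun r _ => ?_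
    rw [T.map_smul_univ]
    simp [smul_eq_mul]
  rw [step1, Finset.sum_eq_single r₀]
  · have hprod : (∏ m, F m (r₀ m))
        = x₀ (Sum.inl 0) * (y (Sum.inl σj.succ))^(2+ℓ') * x₃ (Sum.inr (Sum.inr σj)) := by
      rw [Fintype.prod_sum_type, Fin.prod_univ_four]
      have : (∏ m : Fin ℓ', F (Sum.inr m) (r₀ (Sum.inr m)))
          = (y (Sum.inl σj.succ))^ℓ' := by
        simp [hr₀def, hFdef, tup]
      rw [this]
      show x₀ (Sum.inl 0) * y (Sum.inl σj.succ) * y (Sum.inl σj.succ)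
          * x₃ (Sum.inr (Sum.inr σj)) * (y (Sum.inl σj.succ))^ℓ' = _
      ring
    have hTeq : (fun m => e k (r₀ m))
        = tup k ℓ' (U k 0) (U k σj.succ) (U k σj.succ) (S k σj) (U k σj.succ) := by
      funext m
      rcases m with m4 | mr
      · fin_cases m4 <;> rfl
      · rfl
    rw [hprod, hTeq]
  · intro r _ hne
    by_cases hT0 : T (fun m => e k (r m)) = 0
    · rw [hT0]; ring
    have hgood : goodTuple k ℓ' r := by
      by_contra hg; exact hT0 (hT r hg)
    obtain ⟨j', π, hpat, hlast⟩ := hgood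
    have h4cases : ∀ v : Fin 4, v = 0 ∨ v = 1 ∨ v = 2 ∨ v = 3 := by decide
    -- helper to kill the product
    have kill : ∀ m : Fin 4 ⊕ Fin ℓ', F m (r m) = 0 →
        (∏ m, F m (r m)) * T (fun m => e k (r m)) = 0 := by
      intro m hm
      rw [Finset.prod_eq_zero (Finset.mem_univ m) hm]; ring
    rcases hpat with htS | htU
    swap
    · -- tU case : slot 3 value is a U index, but x₃ has no U components
      have hallU : ∀ m4 : Fin 4, ∃ i0 : Fin (k+1), tU k j' m4 = Sum.inl i0 := by
        intro m4; fin_cases m4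
        · exact ⟨0, rfl⟩
        · exact ⟨j'.succ, rfl⟩
        · exact ⟨j'.succ, rfl⟩
        · exact ⟨0, rfl⟩
      obtain ⟨i0, hi0⟩ := hallU (π 3)
      refine kill (Sum.inl 3) ?_
      rw [htU 3, hi0, hF3]
      exact h2 i0
    -- tS case
    by_cases hπ3 : π 3 = 3
    swap
    · -- slot 3 again gets a U index
      have hallS : ∀ m4 : Fin 4, m4 ≠ 3 → ∃ i0 : Fin (k+1), tS k j' m4 = Sum.inl i0 := by
        intro m4 hm4; fin_cases m4
        · exact ⟨0, rfl⟩
        · exact ⟨j'.succ, rfl⟩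
        · exact ⟨j'.succ, rfl⟩
        · exact absurd rfl hm4
      obtain ⟨i0, hi0⟩ := hallS (π 3) hπ3
      refine kill (Sum.inl 3) ?_
      rw [htS 3, hi0, hF3]
      exact h2 i0
    have hr3 : r (Sum.inl 3) = Sum.inr (Sum.inr j') := by
      rw [htS 3, hπ3]; rfl
    by_cases hy0 : y (Sum.inl j'.succ) = 0
    · refine kill (Sum.inr ⟨0, hℓ'⟩) ?_
      rw [hlast ⟨0, hℓ'⟩, hFr]
      exact hy0
    by_cases hx30 : x₃ (Sum.inr (Sum.inr j')) = 0
    · refine kill (Sum.inl 3) ?_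
      rw [hr3, hF3]
      exact hx30
    have hj' : j' = σj := by
      by_contra hjs
      rcases h3 j' hjs with h | h
      · exact hy0 h
      · exact hx30 h
    have kill0 : π 0 = 1 ∨ π 0 = 2 →
        (∏ m, F m (r m)) * T (fun m => e k (r m)) = 0 := by
      intro h
      refine kill (Sum.inl 0) ?_
      have hr0 : r (Sum.inl 0) = Sum.inl j'.succ := by
        rcases h with h | h <;> rw [htS 0, h] <;> rfl
      rw [hr0, hF0]
      exact h1 j'
    rcases h4cases (π 0) with hπ0 | hπ0 | hπ0 | hπ0
    · -- π 0 = 0 : show r = r₀, contradiction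
      exfalso
      apply hne
      have hval : ∀ m4 : Fin 4, π m4 = 1 ∨ π m4 = 2 → r (Sum.inl m4) = Sum.inl j'.succ := by
        intro m4 h
        rcases h with h | h <;> rw [htS m4, h] <;> rfl
      have hπ1 : π 1 = 1 ∨ π 1 = 2 := by
        rcases h4cases (π 1) with h | h | h | h
        · exact absurd (π.injective (h.trans hπ0.symm)) (by decide)
        · exact Or.inl h
        · exact Or.inr h
        · exact absurd (π.injective (h.trans hπ3.symm)) (by decide)
      have hπ2 : π 2 = 1 ∨ π 2 = 2 := by
        rcases h4cases (π 2) with h | h | h | h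
        · exact absurd (π.injective (h.trans hπ0.symm)) (by decide)
        · exact Or.inl h
        · exact Or.inr h
        · exact absurd (π.injective (h.trans hπ3.symm)) (by decide)
      funext m
      rcases m with m4 | mr
      · rcases h4cases m4 with h | h | h | h <;> subst h
        · rw [htS 0, hπ0, hj']; rfl
        · rw [hval 1 hπ1, hj']; rfl
        · rw [hval 2 hπ2, hj']; rfl
        · rw [hr3, hj']; rfl
      · rw [hlast mr, hj']; rfl
    · exact kill0 (Or.inl hπ0)
    · exact kill0 (Or.inr hπ0)
    · exact absurd (π.injective (hπ0.trans hπ3.symm)) (by decide)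
  · intro h
    exact absurd (Finset.mem_univ r₀) h
theorem beta_is_model_invariant (k ℓ : ℕ) (hk : 2 ≤ k) (hℓ : 2 ≤ ℓ)
    (ε : Fin k → ℝ) (hε : ∀ i, ε i = 1 ∨ ε i = -1)
    (T₁ : MultilinearMap ℝ (fun _ : Fin 4 ⊕ Fin 1 => Model k) ℝ)
    (Tℓ : MultilinearMap ℝ (fun _ : Fin 4 ⊕ Fin ℓ => Model k) ℝ)
    (hT₁ : ∀ v : Fin 4 ⊕ Fin 1 → Idx k, ¬ goodTuple k 1 v → T₁ (fun m => e k (v m)) = 0)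
    (hTℓ : ∀ v : Fin 4 ⊕ Fin ℓ → Idx k, ¬ goodTuple k ℓ v → Tℓ (fun m => e k (v m)) = 0)
    (hne : ∀ j : Fin k,
      T₁ (tup k 1 (U k 0) (U k j.succ) (U k j.succ) (S k j) (U k j.succ)) ≠ 0)
    (A : Model k ≃ₗ[ℝ] Model k)
    (hAip : ∀ x y, ip k ε (A x) (A y) = ip k ε x y)
    (hAR : ∀ x y z w, Rt k (A x) (A y) (A z) (A w) = Rt k x y z w) :
    (∀ j : Fin k,
      T₁ (tup k 1 (A (U k 0)) (A (U k j.succ)) (A (U k j.succ)) (A (S k j))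
        (A (U k j.succ))) ≠ 0) ∧
    ∑ j : Fin k,
        Tℓ (tup k ℓ (A (U k 0)) (A (U k j.succ)) (A (U k j.succ)) (A (S k j))
            (A (U k j.succ)))
          / (T₁ (tup k 1 (A (U k 0)) (A (U k j.succ)) (A (U k j.succ)) (A (S k j))
              (A (U k j.succ)))) ^ ℓ
      = ∑ j : Fin k,
          Tℓ (tup k ℓ (U k 0) (U k j.succ) (U k j.succ) (S k j) (U k j.succ))
            / (T₁ (tup k 1 (U k 0) (U k j.succ) (U k j.succ) (S k j) (U k j.succ))) ^ ℓ := by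
  classical
  have hk0 : 0 < k := lt_of_lt_of_le two_pos hk
  have hℓ0 : 0 < ℓ := lt_of_lt_of_le two_pos hℓ
  obtain ⟨σ, hP, hU⟩ : ∃ σ : Fin k → Fin k, (∀ j,
      (A (U k j.succ)) (Sum.inl (σ j).succ) ≠ 0 ∧
      (A (S k j)) (Sum.inr (Sum.inr (σ j))) ≠ 0) ∧
      ∀ j i, ((A (U k j.succ)) (Sum.inl i.succ) ≠ 0 ∧
        (A (S k j)) (Sum.inr (Sum.inr i)) ≠ 0) → i = σ j := by
    have h := fun j => sigma_exists A ε hAip hAR hk0 j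
    choose σ h1 h2 using h
    exact ⟨σ, h1, h2⟩
  set a0 : ℝ := (A (U k 0)) (Sum.inl 0) with ha0
  set c : Fin k → ℝ := fun j => (A (U k j.succ)) (Sum.inl (σ j).succ) with hc
  set q : Fin k → ℝ := fun j => (A (S k j)) (Sum.inr (Sum.inr (σ j))) with hq
  have key : ∀ j, a0 * c j * c j * q j = 1 := by
    intro j
    have h4 := F4 A ε hAip hAR hk0 j
    rw [Finset.sum_eq_single (σ j)] at h4
    · exact h4
    · intro i _ hi
      by_cases hci : (A (U k j.succ)) (Sum.inl i.succ) = 0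
      · rw [hci]; ring
      by_cases hqi : (A (S k j)) (Sum.inr (Sum.inr i)) = 0
      · rw [hqi]; ring
      · exact absurd (hU j i ⟨hci, hqi⟩) hi
    · simp
  have hcond3 : ∀ j, ∀ i : Fin k, i ≠ σ j →
      (A (U k j.succ)) (Sum.inl i.succ) = 0 ∨ (A (S k j)) (Sum.inr (Sum.inr i)) = 0 := by
    intro j i hi
    by_cases hci : (A (U k j.succ)) (Sum.inl i.succ) = 0
    · exact Or.inl hci
    by_cases hqi : (A (S k j)) (Sum.inr (Sum.inr i)) = 0
    · exact Or.inr hqi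
    · exact absurd (hU j i ⟨hci, hqi⟩) hi
  have hinj : Function.Injective σ := by
    intro j m hjm
    by_contra hne
    have h3 := F3 A ε hAip hAR hk0 j m hne (σ j)
    rw [hjm] at h3
    rcases mul_eq_zero.mp h3 with h | h
    · rw [← hjm] at h; exact (hP j).1 h
    · exact (hP m).2 h
  have hbij : Function.Bijective σ := Finite.injective_iff_bijective.mp hinj
  have hT1j : ∀ j, T₁ (tup k 1 (A (U k 0)) (A (U k j.succ)) (A (U k j.succ)) (A (S k j))
      (A (U k j.succ)))
      = c j * T₁ (tup k 1 (U k 0) (U k (σ j).succ) (U k (σ j).succ) (S k (σ j))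
          (U k (σ j).succ)) := by
    intro j
    rw [expand_T k 1 one_pos T₁ hT₁ _ _ _ (σ j) (F1 A ε hAip hAR hk0)
      (F2 A ε hAip hAR hk0 j) (hcond3 j)]
    have hkey := key j
    set X := T₁ (tup k 1 (U k 0) (U k (σ j).succ) (U k (σ j).succ) (S k (σ j))
        (U k (σ j).succ))
    linear_combination (X * c j) * hkey
  have hTlj : ∀ j, Tℓ (tup k ℓ (A (U k 0)) (A (U k j.succ)) (A (U k j.succ)) (A (S k j))
      (A (U k j.succ)))
      = c j ^ ℓ * Tℓ (tup k ℓ (U k 0) (U k (σ j).succ) (U k (σ j).succ) (S k (σ j))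
          (U k (σ j).succ)) := by
    intro j
    rw [expand_T k ℓ hℓ0 Tℓ hTℓ _ _ _ (σ j) (F1 A ε hAip hAR hk0)
      (F2 A ε hAip hAR hk0 j) (hcond3 j)]
    have hkey := key j
    set X := Tℓ (tup k ℓ (U k 0) (U k (σ j).succ) (U k (σ j).succ) (S k (σ j))
        (U k (σ j).succ))
    have hpow : c j ^ (2 + ℓ) = c j * c j * c j ^ ℓ := by
      rw [pow_add]; ring
    rw [hpow]
    linear_combination (X * c j ^ ℓ) * hkey
  have hT1ne : ∀ j, T₁ (tup k 1 (A (U k 0)) (A (U k j.succ)) (A (U k j.succ)) (A (S k j))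
      (A (U k j.succ))) ≠ 0 := by
    intro j
    rw [hT1j j]
    exact mul_ne_zero (hP j).1 (hne (σ j))
  refine ⟨hT1ne, ?_⟩
  have hterm : ∀ j,
      Tℓ (tup k ℓ (A (U k 0)) (A (U k j.succ)) (A (U k j.succ)) (A (S k j))
        (A (U k j.succ)))
        / (T₁ (tup k 1 (A (U k 0)) (A (U k j.succ)) (A (U k j.succ)) (A (S k j))
            (A (U k j.succ)))) ^ ℓ
      = Tℓ (tup k ℓ (U k 0) (U k (σ j).succ) (U k (σ j).succ) (S k (σ j)) (U k (σ j).succ))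
        / (T₁ (tup k 1 (U k 0) (U k (σ j).succ) (U k (σ j).succ) (S k (σ j))
            (U k (σ j).succ))) ^ ℓ := by
    intro j
    rw [hT1j j, hTlj j, mul_pow]
    exact mul_div_mul_left _ _ (pow_ne_zero ℓ (hP j).1)
  rw [Finset.sum_congr rfl (fun j _ => hterm j)]
  exact Function.Bijective.sum_comp hbij (fun i =>
    Tℓ (tup k ℓ (U k 0) (U k i.succ) (U k i.succ) (S k i) (U k i.succ))
      / (T₁ (tup k 1 (U k 0) (U k i.succ) (U k i.succ) (S k i) (U k i.succ))) ^ ℓ)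
end

section
/- Let k ≥ 2 and ℓ ≥ 2 be integers. Let T₁ : V^5 → ℝ and T_ℓ : V^{4+ℓ} → ℝ be multilinear maps with the following vanishing property: T₁ (respectively T_ℓ) vanishes on every tuple of distinguished basis vectors except possibly on tuples that are obtained, by permuting the first four entries only, from a tuple of the form (U_0, U_j, U_j, S_j; U_j) or (U_0, U_j, U_j, U_0; U_j) (respectively (U_0, U_j, U_j, S_j; U_j,…,U_j) or (U_0, U_j, U_j, U_0; U_j,…,U_j), with U_j in all of the last ℓ slots) for some 1 ≤ j ≤ k. Then for every isomorphism A of the 0-model 𝒱 one has Σ_{j=1}^k T_ℓ(AU_0,AU_j,AU_j,AU_0;AU_j,…,AU_j) · (T₁(AU_0,AU_j,AU_j,AU_0;AU_j))^{ℓ−2} = Σ_{j=1}^k T_ℓ(U_0,U_j,U_j,U_0;U_j,…,U_j) · (T₁(U_0,U_j,U_j,U_0;U_j))^{ℓ−2}. (This is the algebraic content of the assertion that γ_ℓ is an ℓ-model invariant, i.e., independent of the normalized basis chosen.) -/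
open Finset

variable {k : ℕ}

@[simp] lemma U_inl (i j : Fin (k+1)) : U k i (Sum.inl j) = if j = i then 1 else 0 := by
  simp [U, Pi.single_apply]
@[simp] lemma U_inr (i : Fin (k+1)) (r : Fin (k+1) ⊕ Fin k) : U k i (Sum.inr r) = 0 := by
  simp [U, Pi.single_apply]
@[simp] lemma S_inl (i : Fin k) (j : Fin (k+1)) : S k i (Sum.inl j) = 0 := by
  simp [S, Pi.single_apply]
@[simp] lemma S_inrl (i : Fin k) (j : Fin (k+1)) : S k i (Sum.inr (Sum.inl j)) = 0 := by
  simp [S, Pi.single_apply]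
@[simp] lemma S_inrr (i j : Fin k) : S k i (Sum.inr (Sum.inr j)) = if j = i then 1 else 0 := by
  simp [S, Pi.single_apply]
@[simp] lemma Vb_inl (i : Fin (k+1)) (j : Fin (k+1)) : Vb k i (Sum.inl j) = 0 := by
  simp [Vb, Pi.single_apply]
@[simp] lemma Vb_inrr (i : Fin (k+1)) (j : Fin k) : Vb k i (Sum.inr (Sum.inr j)) = 0 := by
  simp [Vb, Pi.single_apply]
@[simp] lemma Vb_inrl (i j : Fin (k+1)) : Vb k i (Sum.inr (Sum.inl j)) = if j = i then 1 else 0 := by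
  simp [Vb, Pi.single_apply]

-- Rt collapse lemmas
lemma RtL1 (j : Fin k) (z w : Model k) : Rt k (U k 0) (U k j.succ) z w = Bf k j z w := by
  simp [Rt, Af, Bf, Fin.succ_ne_zero, Fin.succ_inj, eq_comm]


lemma RtL2 (j n : Fin k) (z w : Model k) :
    Rt k (U k j.succ) (S k n) z w = if j = n then Af k j z w else 0 := by
  simp only [Rt, Af, Bf]
  simp [Fin.succ_ne_zero, Fin.succ_inj, eq_comm]
  split_ifs with h
  · subst h; rfl
  · rfl

lemma RtL3 (n : Fin k) (z w : Model k) : Rt k (U k 0) (S k n) z w = 0 := by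
  simp [Rt, Af, Bf, Fin.succ_ne_zero]

lemma RtL4 (j j' : Fin k) (z w : Model k) : Rt k (U k j.succ) (U k j'.succ) z w = 0 := by
  simp [Rt, Af, Bf, Fin.succ_ne_zero, Fin.succ_inj, eq_comm]

lemma RtL5 (n : Fin (k+1)) (y z w : Model k) : Rt k (Vb k n) y z w = 0 := by
  simp [Rt, Af, Bf]

lemma RtR1 (m : Fin k) (x y : Model k) : Rt k x y (U k 0) (U k m.succ) = Bf k m x y := by
  simp [Rt, Af, Bf, Fin.succ_ne_zero, Fin.succ_inj, eq_comm]

lemma RtR2 (m : Fin k) (x y : Model k) : Rt k x y (U k m.succ) (S k m) = Af k m x y := by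
  simp [Rt, Af, Bf, Fin.succ_ne_zero, Fin.succ_inj, eq_comm]

lemma basis_expand (x : Model k) : x = ∑ idx : Idx k, x idx • e k idx := by
  funext i
  rw [Finset.sum_apply]
  simp [e, Pi.single_apply]

lemma fin4cases (t : Fin 4) : t = 0 ∨ t = 1 ∨ t = 2 ∨ t = 3 := by omega

lemma tS_mem (j : Fin k) (t : Fin 4) :
    tS k j t = Sum.inl 0 ∨ tS k j t = Sum.inl j.succ ∨ tS k j t = Sum.inr (Sum.inr j) := by
  rcases fin4cases t with h | h | h | h <;> subst h <;> simp [tS]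

lemma tS_eq_zero (j : Fin k) (t : Fin 4) (h : tS k j t = Sum.inl 0) : t = 0 := by
  rcases fin4cases t with h' | h' | h' | h' <;> subst h' <;>
    simp_all [tS, Fin.succ_ne_zero]

lemma tU_mem (j : Fin k) (t : Fin 4) :
    tU k j t = Sum.inl 0 ∨ tU k j t = Sum.inl j.succ := by
  rcases fin4cases t with h | h | h | h <;> subst h <;> simp [tU]

lemma tup_inl_s15 (P Q : Model k) {ℓ' : ℕ} (t : Fin 4) :
    tup k ℓ' P Q Q P Q (Sum.inl t) = ![P, Q, Q, P] t := rfl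

lemma tup_inr (P Q : Model k) {ℓ' : ℕ} (t : Fin ℓ') :
    tup k ℓ' P Q Q P Q (Sum.inr t) = Q := rfl

lemma Texpand {ℓ' : ℕ} (hl : 0 < ℓ')
    (T : MultilinearMap ℝ (fun _ : Fin 4 ⊕ Fin ℓ' => Model k) ℝ)
    (hT : ∀ v : Fin 4 ⊕ Fin ℓ' → Idx k, ¬ goodTuple k ℓ' v → T (fun m => e k (v m)) = 0)
    (P Q : Model k) (m : Fin k)
    (hPu : ∀ i : Fin k, P (Sum.inl i.succ) = 0)
    (hPs : ∀ i : Fin k, P (Sum.inr (Sum.inr i)) = 0)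
    (hQ0 : Q (Sum.inl 0) = 0)
    (hQu : ∀ i : Fin k, i ≠ m → Q (Sum.inl i.succ) = 0) :
    T (tup k ℓ' P Q Q P Q)
      = P (Sum.inl 0)^2 * Q (Sum.inl m.succ)^(ℓ'+2)
        * T (tup k ℓ' (U k 0) (U k m.succ) (U k m.succ) (U k 0) (U k m.succ)) := by
  classical
  set G := tup k ℓ' P Q Q P Q with hG
  set v₀ : Fin 4 ⊕ Fin ℓ' → Idx k :=
    Sum.elim ![Sum.inl 0, Sum.inl m.succ, Sum.inl m.succ, Sum.inl 0] (fun _ => Sum.inl m.succ)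
    with hv₀
  have hexp : T G = ∑ v ∈ Fintype.piFinset (fun _ : Fin 4 ⊕ Fin ℓ' => (univ : Finset (Idx k))),
      (∏ s, G s (v s)) * T (fun s => e k (v s)) := by
    have h1 : G = fun s => ∑ idx : Idx k, G s idx • e k idx := funext fun s => basis_expand (G s)
    conv_lhs => rw [h1]
    rw [T.map_sum_finset (fun s idx => G s idx • e k idx) (fun _ => univ)]
    refine Finset.sum_congr rfl fun v _ => ?_
    rw [T.map_smul_univ (fun s => G s (v s)) (fun s => e k (v s)), smul_eq_mul]
  rw [hexp, Finset.sum_eq_single v₀]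
  · -- main term
    have hTv : T (fun s => e k (v₀ s))
        = T (tup k ℓ' (U k 0) (U k m.succ) (U k m.succ) (U k 0) (U k m.succ)) := by
      congr 1
      funext s
      rcases s with t | t
      · rcases fin4cases t with h | h | h | h <;> subst h <;> rfl
      · rfl
    rw [hTv, Fintype.prod_sum_type]
    have h4 : (∏ t : Fin 4, G (Sum.inl t) (v₀ (Sum.inl t)))
        = P (Sum.inl 0) * (Q (Sum.inl m.succ) * (Q (Sum.inl m.succ) * P (Sum.inl 0))) := by
      rw [Fin.prod_univ_four]
      simp [hG, hv₀, tup]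
      ring
    have hl4 : (∏ t : Fin ℓ', G (Sum.inr t) (v₀ (Sum.inr t))) = Q (Sum.inl m.succ) ^ ℓ' := by
      simp [hG, tup_inr, hv₀]
    rw [h4, hl4]; ring
  · -- other terms vanish
    intro v _ hne
    by_cases hg : goodTuple k ℓ' v
    · obtain ⟨j', π, hfour, hlast⟩ := hg
      by_cases hz : (∏ s, G s (v s)) = 0
      · rw [hz, zero_mul]
      · exfalso
        have hfac : ∀ s, G s (v s) ≠ 0 := fun s hs => hz (Finset.prod_eq_zero (mem_univ s) hs)
        have hj' : j' = m := by
          by_contra hne'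
          exact hfac (Sum.inr ⟨0, hl⟩)
            (by rw [hlast]; simpa [hG, tup_inr] using hQu j' hne')
        rw [hj'] at hfour hlast
        rcases hfour with h4 | h4
        · -- tS case : impossible
          have hpin : ∀ t : Fin 4, G (Sum.inl t) = P → π t = 0 := by
            intro t ht
            rcases tS_mem m (π t) with h | h | h
            · exact tS_eq_zero m (π t) h
            · exact absurd (by rw [h4 t, h, ht]; exact hPu m) (hfac (Sum.inl t))
            · exact absurd (by rw [h4 t, h, ht]; exact hPs m) (hfac (Sum.inl t))
          have h0 : π 0 = 0 := hpin 0 rfl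
          have h3 : π 3 = 0 := hpin 3 rfl
          have : (0 : Fin 4) = 3 := π.injective (h0.trans h3.symm)
          simp at this
        · -- tU case : v = v₀
          apply hne
          funext s
          rcases s with t | t
          · have hPslot : ∀ t : Fin 4, G (Sum.inl t) = P → v (Sum.inl t) = Sum.inl 0 := by
              intro t ht
              rcases tU_mem m (π t) with h | h
              · rw [h4 t, h]
              · exact absurd (by rw [h4 t, h, ht]; exact hPu m) (hfac (Sum.inl t))
            have hQslot : ∀ t : Fin 4, G (Sum.inl t) = Q → v (Sum.inl t) = Sum.inl m.succ := by
              intro t ht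
              rcases tU_mem m (π t) with h | h
              · exact absurd (by rw [h4 t, h, ht]; exact hQ0) (hfac (Sum.inl t))
              · rw [h4 t, h]
            rcases fin4cases t with h | h | h | h <;> subst h
            · rw [hPslot 0 rfl]; rfl
            · rw [hQslot 1 rfl]; rfl
            · rw [hQslot 2 rfl]; rfl
            · rw [hPslot 3 rfl]; rfl
          · rw [hlast]; rfl
    · rw [hT v hg, mul_zero]
  · intro h
    exact absurd (by simp [Fintype.mem_piFinset]) h

-- one-sided coordinate lemmas
@[simp] lemma Af_U0_left (i : Fin k) (x : Model k) : Af k i (U k 0) x = x (Sum.inl i.succ) := by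
  simp [Af, Fin.succ_ne_zero, eq_comm]
@[simp] lemma Af_U0_right (i : Fin k) (x : Model k) : Af k i x (U k 0) = -x (Sum.inl i.succ) := by
  simp [Af, Fin.succ_ne_zero, eq_comm]
@[simp] lemma Af_U_left (i j : Fin k) (x : Model k) :
    Af k i (U k j.succ) x = -(if i = j then x (Sum.inl 0) else 0) := by
  simp [Af, Fin.succ_ne_zero, Fin.succ_inj, eq_comm]
@[simp] lemma Af_U_right (i j : Fin k) (x : Model k) :
    Af k i x (U k j.succ) = if i = j then x (Sum.inl 0) else 0 := by
  simp [Af, Fin.succ_ne_zero, Fin.succ_inj, eq_comm]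
@[simp] lemma Af_S_left (i n : Fin k) (x : Model k) : Af k i (S k n) x = 0 := by simp [Af]
@[simp] lemma Af_S_right (i n : Fin k) (x : Model k) : Af k i x (S k n) = 0 := by simp [Af]
@[simp] lemma Af_Vb_left (i : Fin k) (n : Fin (k+1)) (x : Model k) : Af k i (Vb k n) x = 0 := by simp [Af]
@[simp] lemma Af_Vb_right (i : Fin k) (n : Fin (k+1)) (x : Model k) : Af k i x (Vb k n) = 0 := by simp [Af]
@[simp] lemma Bf_U0_left (i : Fin k) (x : Model k) : Bf k i (U k 0) x = 0 := by
  simp [Bf, Fin.succ_ne_zero, eq_comm]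
@[simp] lemma Bf_U0_right (i : Fin k) (x : Model k) : Bf k i x (U k 0) = 0 := by
  simp [Bf, Fin.succ_ne_zero, eq_comm]
@[simp] lemma Bf_U_left (i j : Fin k) (x : Model k) :
    Bf k i (U k j.succ) x = if i = j then x (Sum.inr (Sum.inr i)) else 0 := by
  simp [Bf, Fin.succ_inj, eq_comm]
@[simp] lemma Bf_U_right (i j : Fin k) (x : Model k) :
    Bf k i x (U k j.succ) = -(if i = j then x (Sum.inr (Sum.inr i)) else 0) := by
  simp [Bf, Fin.succ_inj, eq_comm]
@[simp] lemma Bf_S_left (i n : Fin k) (x : Model k) :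
    Bf k i (S k n) x = -(if i = n then x (Sum.inl i.succ) else 0) := by
  simp [Bf, eq_comm]
@[simp] lemma Bf_S_right (i n : Fin k) (x : Model k) :
    Bf k i x (S k n) = if i = n then x (Sum.inl i.succ) else 0 := by
  simp [Bf, eq_comm]
@[simp] lemma Bf_Vb_left (i : Fin k) (n : Fin (k+1)) (x : Model k) : Bf k i (Vb k n) x = 0 := by simp [Bf]
@[simp] lemma Bf_Vb_right (i : Fin k) (n : Fin (k+1)) (x : Model k) : Bf k i x (Vb k n) = 0 := by simp [Bf]

noncomputable def aa {k : ℕ} (A : Model k ≃ₗ[ℝ] Model k) (j m : Fin k) : ℝ :=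
  Af k m (A.symm (U k j.succ)) (A.symm (S k j))
noncomputable def bb {k : ℕ} (A : Model k ≃ₗ[ℝ] Model k) (j m : Fin k) : ℝ :=
  Bf k m (A.symm (U k j.succ)) (A.symm (S k j))
noncomputable def cc {k : ℕ} (A : Model k ≃ₗ[ℝ] Model k) (j m : Fin k) : ℝ :=
  Af k m (A.symm (U k 0)) (A.symm (U k j.succ))
noncomputable def dd {k : ℕ} (A : Model k ≃ₗ[ℝ] Model k) (j m : Fin k) : ℝ :=
  Bf k m (A.symm (U k 0)) (A.symm (U k j.succ))

variable {k : ℕ} (A : Model k ≃ₗ[ℝ] Model k)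

@[simp] lemma ip_Vb_right (ε : Fin k → ℝ) (x : Model k) (i : Fin (k+1)) :
    ip k ε x (Vb k i) = x (Sum.inl i) := by
  simp [ip, mul_ite]

@[simp] lemma ip_S_left (ε : Fin k → ℝ) (n : Fin k) (y : Model k) :
    ip k ε (S k n) y = ε n * y (Sum.inr (Sum.inr n)) := by
  simp [ip, ite_mul, mul_ite]

lemma hVs (hAR : ∀ x y z w, Rt k (A x) (A y) (A z) (A w) = Rt k x y z w)
    (n : Fin (k+1)) (m : Fin k) : A.symm (Vb k n) (Sum.inr (Sum.inr m)) = 0 := by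
  have h0 : ∀ y z w, Rt k (A.symm (Vb k n)) y z w = 0 := by
    intro y z w
    have h := hAR (A.symm (Vb k n)) y z w
    rw [LinearEquiv.apply_symm_apply] at h
    rw [← h, RtL5]
  have h := h0 (U k m.succ) (U k 0) (U k m.succ)
  rw [RtR1] at h
  simpa using h

lemma hRu (hAip : ∀ x y, ip k ε (A x) (A y) = ip k ε x y)
    (hAR : ∀ x y z w, Rt k (A x) (A y) (A z) (A w) = Rt k x y z w)
    (n : Fin k) (i : Fin (k+1)) : A (S k n) (Sum.inl i) = 0 := by
  have h := hAip (S k n) (A.symm (Vb k i))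
  rw [LinearEquiv.apply_symm_apply] at h
  rw [ip_Vb_right, ip_S_left, hVs A hAR] at h
  simpa using h

lemma a_zero (hAip : ∀ x y, ip k ε (A x) (A y) = ip k ε x y)
    (hAR : ∀ x y z w, Rt k (A x) (A y) (A z) (A w) = Rt k x y z w)
    (j m : Fin k) : aa A j m = 0 := by
  have h := hAR (U k m.succ) (S k m) (A.symm (U k j.succ)) (A.symm (S k j))
  simp only [LinearEquiv.apply_symm_apply] at h
  rw [RtR2, RtL2, if_pos rfl] at h
  have hL : Af k j (A (U k m.succ)) (A (S k m)) = 0 := by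
    simp only [Af]
    rw [hRu A hAip hAR, hRu A hAip hAR]
    ring
  rw [hL] at h
  exact h.symm

lemma GEXP (hAR : ∀ x y z w, Rt k (A x) (A y) (A z) (A w) = Rt k x y z w)
    (j : Fin k) (z w : Model k) :
    Bf k j (A z) (A w) = ∑ m, (cc A j m * Bf k m z w + dd A j m * Af k m z w) := by
  have h := hAR (A.symm (U k 0)) (A.symm (U k j.succ)) z w
  simp only [LinearEquiv.apply_symm_apply] at h
  rw [RtL1] at h
  rw [h]
  rfl

lemma HEXP (hAip : ∀ x y, ip k ε (A x) (A y) = ip k ε x y)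
    (hAR : ∀ x y z w, Rt k (A x) (A y) (A z) (A w) = Rt k x y z w)
    (j : Fin k) (z w : Model k) :
    Af k j (A z) (A w) = ∑ m, bb A j m * Af k m z w := by
  have h := hAR (A.symm (U k j.succ)) (A.symm (S k j)) z w
  simp only [LinearEquiv.apply_symm_apply] at h
  rw [RtL2, if_pos rfl] at h
  rw [h]
  have : Rt k (A.symm (U k j.succ)) (A.symm (S k j)) z w
      = ∑ m, (aa A j m * Bf k m z w + bb A j m * Af k m z w) := rfl
  rw [this]
  refine Finset.sum_congr rfl fun m _ => ?_
  rw [a_zero A hAip hAR]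
  ring

lemma T2' (hAip : ∀ x y, ip k ε (A x) (A y) = ip k ε x y)
    (hAR : ∀ x y z w, Rt k (A x) (A y) (A z) (A w) = Rt k x y z w)
    (m m' : Fin k) : ∑ i, cc A m i * bb A m' i = if m = m' then 1 else 0 := by
  have h := hAR (A.symm (U k 0)) (A.symm (U k m.succ)) (A.symm (U k m'.succ)) (A.symm (S k m'))
  simp only [LinearEquiv.apply_symm_apply] at h
  rw [RtL1] at h
  have hR : Rt k (A.symm (U k 0)) (A.symm (U k m.succ)) (A.symm (U k m'.succ)) (A.symm (S k m'))
      = ∑ i, (cc A m i * bb A m' i + dd A m i * aa A m' i) := rfl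
  rw [hR] at h
  have h2 : ∑ i, (cc A m i * bb A m' i + dd A m i * aa A m' i) = ∑ i, cc A m i * bb A m' i := by
    refine Finset.sum_congr rfl fun i _ => ?_
    rw [a_zero A hAip hAR]; ring
  rw [h2] at h
  rw [← h]
  simp [eq_comm]

lemma T1' (hAR : ∀ x y z w, Rt k (A x) (A y) (A z) (A w) = Rt k x y z w)
    (m m' : Fin k) : ∑ i, (cc A m i * dd A m' i + dd A m i * cc A m' i) = 0 := by
  have h := hAR (A.symm (U k 0)) (A.symm (U k m.succ)) (A.symm (U k 0)) (A.symm (U k m'.succ))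
  simp only [LinearEquiv.apply_symm_apply] at h
  rw [RtL1] at h
  have hR : Rt k (A.symm (U k 0)) (A.symm (U k m.succ)) (A.symm (U k 0)) (A.symm (U k m'.succ))
      = ∑ i, (cc A m i * dd A m' i + dd A m i * cc A m' i) := rfl
  rw [hR] at h
  rw [← h]
  simp

-- values of Bf_j and Af_j at images of basis vectors
lemma vUS (hAR : ∀ x y z w, Rt k (A x) (A y) (A z) (A w) = Rt k x y z w) (j m m' : Fin k) :
    Bf k j (A (U k m.succ)) (A (S k m')) = if m = m' then cc A j m else 0 := by
  rw [GEXP A hAR]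
  simp [mul_ite, Finset.sum_ite_eq, eq_comm, Fin.succ_ne_zero]
  split_ifs with h
  · rw [h]
  · rfl
lemma vUU (hAR : ∀ x y z w, Rt k (A x) (A y) (A z) (A w) = Rt k x y z w) (j m m' : Fin k) :
    Bf k j (A (U k m.succ)) (A (U k m'.succ)) = 0 := by
  rw [GEXP A hAR]; simp [Fin.succ_ne_zero, eq_comm]
lemma vSS (hAR : ∀ x y z w, Rt k (A x) (A y) (A z) (A w) = Rt k x y z w) (j m m' : Fin k) :
    Bf k j (A (S k m)) (A (S k m')) = 0 := by
  rw [GEXP A hAR]; simp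
lemma vSU (hAR : ∀ x y z w, Rt k (A x) (A y) (A z) (A w) = Rt k x y z w) (j m m' : Fin k) :
    Bf k j (A (S k m)) (A (U k m'.succ)) = -(if m = m' then cc A j m else 0) := by
  rw [GEXP A hAR]
  simp [mul_ite, Finset.sum_ite_eq, eq_comm, Fin.succ_ne_zero]
  split_ifs with h
  · rw [h]
  · rfl
lemma vU0U (hAR : ∀ x y z w, Rt k (A x) (A y) (A z) (A w) = Rt k x y z w) (j m : Fin k) :
    Bf k j (A (U k 0)) (A (U k m.succ)) = dd A j m := by
  rw [GEXP A hAR]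
  simp [mul_ite, Finset.sum_ite_eq, eq_comm, Fin.succ_ne_zero]
lemma vUU0 (hAR : ∀ x y z w, Rt k (A x) (A y) (A z) (A w) = Rt k x y z w) (j m : Fin k) :
    Bf k j (A (U k m.succ)) (A (U k 0)) = -dd A j m := by
  rw [GEXP A hAR]
  simp [mul_ite, Finset.sum_ite_eq, eq_comm, Fin.succ_ne_zero]
lemma vSU0 (hAR : ∀ x y z w, Rt k (A x) (A y) (A z) (A w) = Rt k x y z w) (j m : Fin k) :
    Bf k j (A (S k m)) (A (U k 0)) = 0 := by
  rw [GEXP A hAR]; simp [Fin.succ_ne_zero, eq_comm]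
lemma vU0S (hAR : ∀ x y z w, Rt k (A x) (A y) (A z) (A w) = Rt k x y z w) (j m : Fin k) :
    Bf k j (A (U k 0)) (A (S k m)) = 0 := by
  rw [GEXP A hAR]; simp [Fin.succ_ne_zero, eq_comm]
lemma wU0U (hAip : ∀ x y, ip k ε (A x) (A y) = ip k ε x y)
    (hAR : ∀ x y z w, Rt k (A x) (A y) (A z) (A w) = Rt k x y z w) (j m : Fin k) :
    Af k j (A (U k 0)) (A (U k m.succ)) = bb A j m := by
  rw [HEXP A hAip hAR]
  simp [mul_ite, Finset.sum_ite_eq, eq_comm, Fin.succ_ne_zero]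
lemma wUU (hAip : ∀ x y, ip k ε (A x) (A y) = ip k ε x y)
    (hAR : ∀ x y z w, Rt k (A x) (A y) (A z) (A w) = Rt k x y z w) (j m m' : Fin k) :
    Af k j (A (U k m.succ)) (A (U k m'.succ)) = 0 := by
  rw [HEXP A hAip hAR]; simp [Fin.succ_ne_zero, eq_comm]
lemma wU0S (hAip : ∀ x y, ip k ε (A x) (A y) = ip k ε x y)
    (hAR : ∀ x y z w, Rt k (A x) (A y) (A z) (A w) = Rt k x y z w) (j m : Fin k) :
    Af k j (A (U k 0)) (A (S k m)) = 0 := by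
  rw [HEXP A hAip hAR]; simp
lemma wUS (hAip : ∀ x y, ip k ε (A x) (A y) = ip k ε x y)
    (hAR : ∀ x y z w, Rt k (A x) (A y) (A z) (A w) = Rt k x y z w) (j m m' : Fin k) :
    Af k j (A (U k m.succ)) (A (S k m')) = 0 := by
  rw [HEXP A hAip hAR]; simp

lemma Pl_Bf (j : Fin k) (x y z w : Model k) :
    Bf k j x y * Bf k j z w - Bf k j x z * Bf k j y w + Bf k j x w * Bf k j y z = 0 := by
  simp only [Bf]; ring

lemma Wdg_AB (j : Fin k) (x y z w : Model k) :
    Af k j x y * Bf k j z w - Af k j x z * Bf k j y w + Af k j x w * Bf k j y z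
    + Bf k j x y * Af k j z w - Bf k j x z * Af k j y w + Bf k j x w * Af k j y z = 0 := by
  simp only [Af, Bf]; ring

lemma W3 (hAR : ∀ x y z w, Rt k (A x) (A y) (A z) (A w) = Rt k x y z w)
    {m m' : Fin k} (j : Fin k) (hne : m ≠ m') : cc A j m * cc A j m' = 0 := by
  have h := Pl_Bf j (A (U k m.succ)) (A (S k m)) (A (U k m'.succ)) (A (S k m'))
  rw [vUS A hAR, vUS A hAR, vUS A hAR, vUU A hAR, vSS A hAR, vSU A hAR] at h
  simp [if_pos rfl, if_neg hne, if_neg (Ne.symm hne)] at h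
  rcases h with h | h
  · rw [h, zero_mul]
  · rw [h, mul_zero]

lemma W4 (hAR : ∀ x y z w, Rt k (A x) (A y) (A z) (A w) = Rt k x y z w)
    {m m' : Fin k} (j : Fin k) (hne : m ≠ m') : cc A j m * dd A j m' = 0 := by
  have h := Pl_Bf j (A (U k m.succ)) (A (S k m)) (A (U k 0)) (A (U k m'.succ))
  rw [vUS A hAR, vU0U A hAR, vUU0 A hAR, vSU A hAR, vUU A hAR, vSU0 A hAR] at h
  simp [if_pos rfl, if_neg hne] at h
  rcases h with h | h
  · rw [h, zero_mul]
  · rw [h, mul_zero]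

lemma W6 (hAip : ∀ x y, ip k ε (A x) (A y) = ip k ε x y)
    (hAR : ∀ x y z w, Rt k (A x) (A y) (A z) (A w) = Rt k x y z w)
    {m m' : Fin k} (j : Fin k) (hne : m ≠ m') : bb A j m * cc A j m' = 0 := by
  have h := Wdg_AB j (A (U k 0)) (A (U k m.succ)) (A (U k m'.succ)) (A (S k m'))
  rw [wU0U A hAip hAR, wU0U A hAip hAR, wU0S A hAip hAR, wUS A hAip hAR, wUS A hAip hAR,
    wUU A hAip hAR, vUS A hAR, vUS A hAR, vU0U A hAR, vU0U A hAR, vU0S A hAR, vUU A hAR] at h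
  simp [if_pos rfl, if_neg hne] at h
  rcases h with h | h
  · rw [h, zero_mul]
  · rw [h, mul_zero]

lemma exists_struct (hk : 2 ≤ k) (hε : ∀ i, ε i = 1 ∨ ε i = -1)
    (hAip : ∀ x y, ip k ε (A x) (A y) = ip k ε x y)
    (hAR : ∀ x y z w, Rt k (A x) (A y) (A z) (A w) = Rt k x y z w) :
    ∃ σ : Equiv.Perm (Fin k),
      (∀ i : Fin k, A (U k 0) (Sum.inl i.succ) = 0) ∧
      (∀ i : Fin k, A (U k 0) (Sum.inr (Sum.inr i)) = 0) ∧
      (∀ j : Fin k, A (U k j.succ) (Sum.inl 0) = 0) ∧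
      (∀ j i : Fin k, i ≠ σ.symm j → A (U k j.succ) (Sum.inl i.succ) = 0) ∧
      (∀ j : Fin k, (A (U k 0) (Sum.inl 0))^2 * (A (U k j.succ) (Sum.inl (σ.symm j).succ))^4 = 1) := by
  classical
  have hrowC : ∀ j, ∃ m, cc A j m ≠ 0 := by
    intro j
    by_contra hc
    push_neg at hc
    have h := T2' A hAip hAR j j
    simp [hc] at h
  set τ : Fin k → Fin k := fun j => (hrowC j).choose with hτdef
  have hτ : ∀ j, cc A j (τ j) ≠ 0 := fun j => (hrowC j).choose_spec
  have ccz : ∀ j m, m ≠ τ j → cc A j m = 0 := by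
    intro j m h
    rcases mul_eq_zero.mp (W3 A hAR j h) with h' | h'
    · exact h'
    · exact absurd h' (hτ j)
  have bbz : ∀ j m, m ≠ τ j → bb A j m = 0 := by
    intro j m h
    rcases mul_eq_zero.mp (W6 A hAip hAR j h) with h' | h'
    · exact h'
    · exact absurd h' (hτ j)
  have ddz1 : ∀ j, dd A j (τ j) = 0 := by
    intro j
    have h := T1' A hAR j j
    rw [Finset.sum_eq_single (τ j)] at h
    · have h2 : cc A j (τ j) * dd A j (τ j) = 0 := by linarith
      rcases mul_eq_zero.mp h2 with h' | h'
      · exact absurd h' (hτ j)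
      · exact h'
    · intro i _ hi
      rw [ccz j i hi]; ring
    · intro hmem; exact absurd (Finset.mem_univ _) hmem
  have ddz : ∀ j m, dd A j m = 0 := by
    intro j m
    by_cases h : m = τ j
    · rw [h]; exact ddz1 j
    · have h4 := W4 A hAR j (fun he => h he.symm : τ j ≠ m)
      rcases mul_eq_zero.mp h4 with h' | h'
      · exact absurd h' (hτ j)
      · exact h'
  have diag : ∀ j, cc A j (τ j) * bb A j (τ j) = 1 := by
    intro j
    have h := T2' A hAip hAR j j
    rw [if_pos rfl, Finset.sum_eq_single (τ j)] at h
    · exact h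
    · intro i _ hi; rw [ccz j i hi]; ring
    · intro hmem; exact absurd (Finset.mem_univ _) hmem
  have bbτ : ∀ j, bb A j (τ j) ≠ 0 := fun j => right_ne_zero_of_mul_eq_one (diag j)
  have τinj : Function.Injective τ := by
    intro j j' h
    by_contra hne
    have h2 := T2' A hAip hAR j j'
    rw [if_neg hne, Finset.sum_eq_single (τ j)] at h2
    · rw [h] at h2
      rcases mul_eq_zero.mp h2 with h' | h'
      · rw [← h] at h'; exact (hτ j) h'
      · exact (bbτ j') h'
    · intro i _ hi; rw [ccz j i hi]; ring
    · intro hmem; exact absurd (Finset.mem_univ _) hmem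
  have τbij := Finite.injective_iff_bijective.mp τinj
  refine ⟨Equiv.ofBijective τ τbij, ?_⟩
  have hτbij : ∀ j, τ ((Equiv.ofBijective τ τbij).symm j) = j :=
    fun j => (Equiv.ofBijective τ τbij).apply_symm_apply j
  have hσi : ∀ i, (Equiv.ofBijective τ τbij).symm (τ i) = i :=
    fun i => (Equiv.ofBijective τ τbij).symm_apply_apply i
  -- expansions with single term
  have HX : ∀ j z w, Af k j (A z) (A w) = bb A j (τ j) * Af k (τ j) z w := by
    intro j z w
    rw [HEXP A hAip hAR, Finset.sum_eq_single (τ j)]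
    · intro i _ hi; rw [bbz j i hi]; ring
    · intro hmem; exact absurd (Finset.mem_univ _) hmem
  have GX : ∀ j z w, Bf k j (A z) (A w) = cc A j (τ j) * Bf k (τ j) z w := by
    intro j z w
    rw [GEXP A hAR, Finset.sum_eq_single (τ j)]
    · rw [ddz]; ring
    · intro i _ hi; rw [ccz j i hi, ddz]; ring
    · intro hmem; exact absurd (Finset.mem_univ _) hmem
  -- coordinates of P := A (U k 0)
  have F1 : ∀ i : Fin k, A (U k 0) (Sum.inl i.succ) = 0 := by
    intro i
    have h := GX i (U k 0) (A.symm (S k i))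
    rw [LinearEquiv.apply_symm_apply] at h
    simpa using h
  have F2 : ∀ i : Fin k, A (U k 0) (Sum.inr (Sum.inr i)) = 0 := by
    intro i
    have h := GX i (U k 0) (A.symm (U k i.succ))
    rw [LinearEquiv.apply_symm_apply] at h
    simpa using h
  have PQ : ∀ j i : Fin k, A (U k 0) (Sum.inl 0) * A (U k j.succ) (Sum.inl i.succ)
      = if τ i = j then bb A i (τ i) else 0 := by
    intro j i
    have h := HX i (U k 0) (U k j.succ)
    simp only [Af] at h
    rw [F1 i] at h
    simp [Fin.succ_ne_zero, Fin.succ_inj, eq_comm] at h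
    rw [← h]
    simp [eq_comm]
  have i0 : Fin k := ⟨0, by omega⟩
  have hP0 : A (U k 0) (Sum.inl 0) ≠ 0 := by
    intro h
    have h2 := PQ (τ i0) i0
    rw [if_pos rfl, h, zero_mul] at h2
    exact (bbτ i0) h2.symm
  have F4 : ∀ j i : Fin k, i ≠ (Equiv.ofBijective τ τbij).symm j →
      A (U k j.succ) (Sum.inl i.succ) = 0 := by
    intro j i hne
    have hne' : τ i ≠ j := fun h => hne (h ▸ (hσi i).symm)
    have h := PQ j i
    rw [if_neg hne'] at h
    rcases mul_eq_zero.mp h with h' | h'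
    · exact absurd h' hP0
    · exact h'
  have Qune : ∀ j : Fin k, A (U k j.succ) (Sum.inl ((Equiv.ofBijective τ τbij).symm j).succ) ≠ 0 := by
    intro j h
    have h2 := PQ j ((Equiv.ofBijective τ τbij).symm j)
    rw [if_pos (hτbij j), h, mul_zero] at h2
    exact (bbτ _) h2.symm
  have F3 : ∀ j : Fin k, A (U k j.succ) (Sum.inl 0) = 0 := by
    intro j
    have i1 : Fin k := ⟨1, by omega⟩
    have hex : ∃ i' : Fin k, τ i' ≠ j := by
      by_contra hc
      push_neg at hc
      have h01 : (⟨0, by omega⟩ : Fin k) ≠ ⟨1, by omega⟩ := by simp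
      exact h01 (τinj ((hc _).trans (hc _).symm))
    obtain ⟨i', hi'⟩ := hex
    have h := HX i' (U k j.succ) (U k (τ i').succ)
    have hz : A (U k j.succ) (Sum.inl i'.succ) = 0 :=
      F4 j i' (fun he => hi' (by rw [he, hτbij]))
    have hX : A (U k (τ i').succ) (Sum.inl i'.succ) ≠ 0 := by
      have := Qune (τ i'); rwa [hσi] at this
    simp only [Af] at h
    rw [hz] at h
    have h00 : ¬((0 : Fin (k+1)) = j.succ) := fun hh => Fin.succ_ne_zero j hh.symm
    simp [hi', h00] at h
    rcases h with h | h
    · exact h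
    · exact absurd h hX
  -- structure of A (S n)
  have hRsv : ∀ n j : Fin k, A (U k (τ j).succ) (Sum.inl j.succ) * A (S k n) (Sum.inr (Sum.inr j))
      = if τ j = n then cc A j (τ j) else 0 := by
    intro n j
    have h := GX j (U k (τ j).succ) (S k n)
    simp only [Bf] at h
    rw [hRu A hAip hAR n j.succ, mul_zero, sub_zero] at h
    simp [eq_comm] at h
    rw [← h]
    simp [eq_comm]
  have hq : ∀ j, A (U k (τ j).succ) (Sum.inl j.succ) ≠ 0 := fun j => by
    have := Qune (τ j); rwa [hσi] at this
  have hRz : ∀ n j, τ j ≠ n → A (S k n) (Sum.inr (Sum.inr j)) = 0 := by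
    intro n j hne
    have h := hRsv n j
    rw [if_neg hne] at h
    rcases mul_eq_zero.mp h with h | h
    · exact absurd h (hq j)
    · exact h
  have F5 : ∀ i : Fin k,
      (A (U k 0) (Sum.inl 0))^2 * (A (U k (τ i).succ) (Sum.inl i.succ))^4 = 1 := by
    intro i
    set P0 := A (U k 0) (Sum.inl 0) with hP0def
    set q := A (U k (τ i).succ) (Sum.inl i.succ) with hqdef
    set r := A (S k (τ i)) (Sum.inr (Sum.inr i)) with hrdef
    have rel2 : P0 * q = bb A i (τ i) := by
      have := PQ (τ i) i; rwa [if_pos rfl] at this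
    have rel3 : q * r = cc A i (τ i) := by
      have := hRsv (τ i) i; rwa [if_pos rfl] at this
    have ipfact : ε i * (r * r) = ε (τ i) := by
      have h := hAip (S k (τ i)) (S k (τ i))
      have hRHS : ip k ε (S k (τ i)) (S k (τ i)) = ε (τ i) := by simp
      rw [hRHS] at h
      rw [show ip k ε (A (S k (τ i))) (A (S k (τ i)))
          = (∑ i' : Fin (k+1), (A (S k (τ i)) (Sum.inl i') * A (S k (τ i)) (Sum.inr (Sum.inl i'))
            + A (S k (τ i)) (Sum.inr (Sum.inl i')) * A (S k (τ i)) (Sum.inl i')))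
          + ∑ m : Fin k, ε m * A (S k (τ i)) (Sum.inr (Sum.inr m)) * A (S k (τ i)) (Sum.inr (Sum.inr m)) from rfl] at h
      have h1 : ∀ i' : Fin (k+1), A (S k (τ i)) (Sum.inl i') = 0 := hRu A hAip hAR (τ i)
      simp only [h1, zero_mul, mul_zero, add_zero, zero_add, Finset.sum_const_zero] at h
      rw [Finset.sum_eq_single i] at h
      · rw [← h]; ring
      · intro m _ hm
        rw [hRz (τ i) m (fun he => hm (τinj he))]; ring
      · intro hmem; exact absurd (Finset.mem_univ _) hmem
    have hr2 : r * r = 1 := by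
      rcases hε i with h1 | h1 <;> rcases hε (τ i) with h2 | h2 <;>
        rw [h1, h2] at ipfact <;> nlinarith [ipfact]
    have h5 : P0 * q^2 * r = 1 := by
      have heq : P0 * q^2 * r = (P0 * q) * (q * r) := by ring
      rw [heq, rel2, rel3, mul_comm]
      exact diag i
    have h6 : (P0 * q^2)^2 * (r * r) = 1 := by
      have : (P0 * q^2)^2 * (r * r) = (P0 * q^2 * r)^2 := by ring
      rw [this, h5]; norm_num
    rw [hr2, mul_one] at h6
    calc P0^2 * q^4 = (P0 * q^2)^2 := by ring
      _ = 1 := h6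
  refine ⟨F1, F2, F3, F4, fun j => ?_⟩
  have := F5 ((Equiv.ofBijective τ τbij).symm j)
  rwa [hτbij j] at this

theorem gamma_is_model_invariant (k ℓ : ℕ) (hk : 2 ≤ k) (hℓ : 2 ≤ ℓ)
    (ε : Fin k → ℝ) (hε : ∀ i, ε i = 1 ∨ ε i = -1)
    (T₁ : MultilinearMap ℝ (fun _ : Fin 4 ⊕ Fin 1 => Model k) ℝ)
    (Tℓ : MultilinearMap ℝ (fun _ : Fin 4 ⊕ Fin ℓ => Model k) ℝ)
    (hT₁ : ∀ v : Fin 4 ⊕ Fin 1 → Idx k, ¬ goodTuple k 1 v → T₁ (fun m => e k (v m)) = 0)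
    (hTℓ : ∀ v : Fin 4 ⊕ Fin ℓ → Idx k, ¬ goodTuple k ℓ v → Tℓ (fun m => e k (v m)) = 0)
    (A : Model k ≃ₗ[ℝ] Model k)
    (hAip : ∀ x y, ip k ε (A x) (A y) = ip k ε x y)
    (hAR : ∀ x y z w, Rt k (A x) (A y) (A z) (A w) = Rt k x y z w) :
    ∑ j : Fin k,
        Tℓ (tup k ℓ (A (U k 0)) (A (U k j.succ)) (A (U k j.succ)) (A (U k 0))
            (A (U k j.succ)))
          * (T₁ (tup k 1 (A (U k 0)) (A (U k j.succ)) (A (U k j.succ)) (A (U k 0))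
              (A (U k j.succ)))) ^ (ℓ - 2)
      = ∑ j : Fin k,
          Tℓ (tup k ℓ (U k 0) (U k j.succ) (U k j.succ) (U k 0) (U k j.succ))
            * (T₁ (tup k 1 (U k 0) (U k j.succ) (U k j.succ) (U k 0) (U k j.succ))) ^ (ℓ - 2) := by
  classical
  obtain ⟨n, rfl⟩ : ∃ n, ℓ = n + 2 := ⟨ℓ - 2, by omega⟩
  obtain ⟨σ, F1, F2, F3, F4, F5⟩ := exists_struct A hk hε hAip hAR
  set Cl : Fin k → ℝ := fun m =>
    Tℓ (tup k (n+2) (U k 0) (U k m.succ) (U k m.succ) (U k 0) (U k m.succ)) with hCl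
  set C1 : Fin k → ℝ := fun m =>
    T₁ (tup k 1 (U k 0) (U k m.succ) (U k m.succ) (U k 0) (U k m.succ)) with hC1
  have hTe : ∀ j : Fin k,
      Tℓ (tup k (n+2) (A (U k 0)) (A (U k j.succ)) (A (U k j.succ)) (A (U k 0)) (A (U k j.succ)))
      = (A (U k 0) (Sum.inl 0))^2 * (A (U k j.succ) (Sum.inl (σ.symm j).succ))^(n+2+2)
        * Cl (σ.symm j) :=
    fun j => Texpand (by omega) Tℓ hTℓ (A (U k 0)) (A (U k j.succ)) (σ.symm j)
      F1 F2 (F3 j) (fun i hi => F4 j i hi)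
  have hT1 : ∀ j : Fin k,
      T₁ (tup k 1 (A (U k 0)) (A (U k j.succ)) (A (U k j.succ)) (A (U k 0)) (A (U k j.succ)))
      = (A (U k 0) (Sum.inl 0))^2 * (A (U k j.succ) (Sum.inl (σ.symm j).succ))^(1+2)
        * C1 (σ.symm j) :=
    fun j => Texpand (by omega) T₁ hT₁ (A (U k 0)) (A (U k j.succ)) (σ.symm j)
      F1 F2 (F3 j) (fun i hi => F4 j i hi)
  have hstep : ∀ j : Fin k,
      Tℓ (tup k (n+2) (A (U k 0)) (A (U k j.succ)) (A (U k j.succ)) (A (U k 0)) (A (U k j.succ)))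
        * (T₁ (tup k 1 (A (U k 0)) (A (U k j.succ)) (A (U k j.succ)) (A (U k 0))
            (A (U k j.succ)))) ^ (n + 2 - 2)
      = Cl (σ.symm j) * C1 (σ.symm j) ^ (n + 2 - 2) := by
    intro j
    rw [hTe j, hT1 j]
    simp only [Nat.add_sub_cancel]
    set P0 := A (U k 0) (Sum.inl 0)
    set q := A (U k j.succ) (Sum.inl (σ.symm j).succ)
    have hF := F5 j
    have expand : (P0^2 * q^(n+2+2) * Cl (σ.symm j)) * (P0^2 * q^(1+2) * C1 (σ.symm j))^n
        = (P0^2 * q^4)^(n+1) * (Cl (σ.symm j) * C1 (σ.symm j)^n) := by ring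
    rw [expand, hF, one_pow, one_mul]
  calc ∑ j : Fin k,
        Tℓ (tup k (n+2) (A (U k 0)) (A (U k j.succ)) (A (U k j.succ)) (A (U k 0)) (A (U k j.succ)))
          * (T₁ (tup k 1 (A (U k 0)) (A (U k j.succ)) (A (U k j.succ)) (A (U k 0))
              (A (U k j.succ)))) ^ (n + 2 - 2)
      = ∑ j : Fin k, Cl (σ.symm j) * C1 (σ.symm j) ^ (n + 2 - 2) :=
        Finset.sum_congr rfl fun j _ => hstep j
    _ = ∑ j : Fin k, Cl j * C1 j ^ (n + 2 - 2) :=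
        Equiv.sum_comp σ.symm (fun i => Cl i * C1 i ^ (n + 2 - 2))
    _ = ∑ j : Fin k,
          Tℓ (tup k (n+2) (U k 0) (U k j.succ) (U k j.succ) (U k 0) (U k j.succ))
            * (T₁ (tup k 1 (U k 0) (U k j.succ) (U k j.succ) (U k 0) (U k j.succ))) ^ (n + 2 - 2) :=
        rfl
end
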